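/- Let A : ℝ^m →ₗ ℝ^n be a linear map, d ∈ ℝ^n, and η₁,…,η_N ∈ ℝ^m. The minimizer set of q ↦ (1/N) ∑_{s=1}^N ‖d - A(q + η_s)‖² equals the minimizer set of q ↦ ‖d - A(q + η̄)‖², where η̄ = (1/N) ∑_s η_s is the sample mean. In particular, for a linear forward operator the single-sample point estimate with the mean noise and the multi-sample averaged misfit estimate coincide. -/

import Mathlib

open Finset

lemma avg_sq_key {n N : ℕ} (hN : 0 < N) (x : EuclideanSpace ℝ (Fin n))
    (w : Fin N → EuclideanSpace ℝ (Fin n)) :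
    (N : ℝ)⁻¹ * ∑ s, ‖x - w s‖ ^ 2 =
      ‖x - (N : ℝ)⁻¹ • ∑ s, w s‖ ^ 2 +
        ((N : ℝ)⁻¹ * ∑ s, ‖w s‖ ^ 2 - ‖(N : ℝ)⁻¹ • ∑ s, w s‖ ^ 2) := by
  have hNne : (N : ℝ) ≠ 0 := Nat.cast_ne_zero.mpr hN.ne'
  have h1 : ∀ s : Fin N, ‖x - w s‖ ^ 2
      = ‖x‖ ^ 2 - 2 * inner ℝ x (w s) + ‖w s‖ ^ 2 := fun s => norm_sub_sq_real x (w s)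
  have h2 : ‖x - (N : ℝ)⁻¹ • ∑ s, w s‖ ^ 2
      = ‖x‖ ^ 2 - 2 * inner ℝ x ((N : ℝ)⁻¹ • ∑ s, w s) + ‖(N : ℝ)⁻¹ • ∑ s, w s‖ ^ 2 :=
    norm_sub_sq_real _ _
  have h3 : (inner ℝ x ((N : ℝ)⁻¹ • ∑ s, w s) : ℝ) = (N : ℝ)⁻¹ * ∑ s, inner ℝ x (w s) := by
    rw [real_inner_smul_right, inner_sum]
  rw [h2, h3]
  simp only [h1]
  rw [Finset.sum_add_distrib, Finset.sum_sub_distrib, Finset.sum_const, Finset.card_univ,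
    Fintype.card_fin, ← Finset.mul_sum, nsmul_eq_mul]
  field_simp
  ring

/-- For a linear forward operator, the minimizer set of the multi-sample averaged
quadratic misfit `q ↦ (1/N) ∑ ‖d - A(q + η_s)‖²` equals the minimizer set of the
single misfit at the sample-mean noise `q ↦ ‖d - A(q + η̄)‖²`. -/
theorem stmt0 {m n N : ℕ} (hN : 0 < N)
    (A : EuclideanSpace ℝ (Fin m) →ₗ[ℝ] EuclideanSpace ℝ (Fin n))
    (d : EuclideanSpace ℝ (Fin n)) (η : Fin N → EuclideanSpace ℝ (Fin m)) :
    {q : EuclideanSpace ℝ (Fin m) |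
        ∀ q', (N : ℝ)⁻¹ * ∑ s, ‖d - A (q + η s)‖ ^ 2 ≤
              (N : ℝ)⁻¹ * ∑ s, ‖d - A (q' + η s)‖ ^ 2} =
    {q : EuclideanSpace ℝ (Fin m) |
        ∀ q', ‖d - A (q + (N : ℝ)⁻¹ • ∑ s, η s)‖ ^ 2 ≤
              ‖d - A (q' + (N : ℝ)⁻¹ • ∑ s, η s)‖ ^ 2} := by
  have key : ∀ q : EuclideanSpace ℝ (Fin m),
      (N : ℝ)⁻¹ * ∑ s, ‖d - A (q + η s)‖ ^ 2 =
        ‖d - A (q + (N : ℝ)⁻¹ • ∑ s, η s)‖ ^ 2 +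
          ((N : ℝ)⁻¹ * ∑ s, ‖A (η s)‖ ^ 2 - ‖(N : ℝ)⁻¹ • ∑ s, A (η s)‖ ^ 2) := by
    intro q
    have h1 : ∀ s : Fin N, d - A (q + η s) = (d - A q) - A (η s) := fun s => by
      rw [map_add, sub_add_eq_sub_sub]
    have h2 : d - A (q + (N : ℝ)⁻¹ • ∑ s, η s) = (d - A q) - (N : ℝ)⁻¹ • ∑ s, A (η s) := by
      rw [map_add, map_smul, map_sum, sub_add_eq_sub_sub]
    simp only [h1, h2]
    exact avg_sq_key hN (d - A q) (fun s => A (η s))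
  ext q
  simp only [Set.mem_setOf_eq]
  constructor
  · intro h q'
    have := h q'
    rw [key q, key q'] at this
    linarith
  · intro h q'
    rw [key q, key q']
    have := h q'
    linarith
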